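/- For every α > 4 and r ∈ (0,1/2), the integral D_r(1−α, 1−α, 1+α, 1/2) = ∫_{A_r} x₁^{1−α} x₂^{1−α} x₃^{1+α} Δ(x₁,x₂,x₃)^{−1/2} dx₁ dx₂ dx₃ is finite. -/

import Mathlib

open MeasureTheory

/-- `Δ(x₁,x₂,x₃) = (x₁+x₂+x₃)(x₁+x₂−x₃)(x₁−x₂+x₃)(−x₁+x₂+x₃)`. -/
noncomputable def Delta (x₁ x₂ x₃ : ℝ) : ℝ :=
  (x₁ + x₂ + x₃) * (x₁ + x₂ - x₃) * (x₁ - x₂ + x₃) * (-x₁ + x₂ + x₃)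

/-- The region `A_r` of ordered triangle-admissible triples. -/
def regionA (r : ℝ) : Set (ℝ × ℝ × ℝ) :=
  {p | r ≤ p.1 ∧ p.1 < p.2.1 ∧ p.2.1 < p.2.2 ∧ p.2.2 ≤ 1 ∧
    p.2.1 - p.1 ≤ p.2.2 ∧ p.2.2 ≤ p.1 + p.2.1}

/-- The 1D model integral is finite. -/
lemma aux_M_lt_top :
    ∫⁻ t in Set.Ioc (0:ℝ) 2, ENNReal.ofReal (t ^ (-(1/2) : ℝ)) < ⊤ := by
  have h : IntegrableOn (fun t : ℝ => t ^ (-(1/2) : ℝ)) (Set.Ioc 0 2) volume := by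
    rw [integrableOn_Ioc_iff_integrableOn_Ioo]
    rw [intervalIntegral.integrableOn_Ioo_rpow_iff (by norm_num : (0:ℝ) < 2)]
    norm_num
  exact h.lintegral_lt_top

lemma aux_meas :
    Measurable (fun p : ℝ × ℝ × ℝ =>
      ENNReal.ofReal ((p.1 + p.2.1 - p.2.2) ^ (-(1/2) : ℝ))) := by
  apply Measurable.ennreal_ofReal
  exact ((measurable_fst.add (measurable_fst.comp measurable_snd)).sub
    (measurable_snd.comp measurable_snd)).pow_const _

/-- Inner integral bound, uniform in `c ≤ 2`. -/
lemma aux_inner (c : ℝ) (hc : c ≤ 2) :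
    ∫⁻ z in Set.Icc (0:ℝ) 2, ENNReal.ofReal ((c - z) ^ (-(1/2) : ℝ))
      ≤ ∫⁻ t in Set.Ioc (0:ℝ) 2, ENNReal.ofReal (t ^ (-(1/2) : ℝ)) := by
  set φ : ℝ → ENNReal :=
    (Set.Ioc (0:ℝ) 2).indicator (fun t => ENNReal.ofReal (t ^ (-(1/2) : ℝ))) with hφ
  have hφm : Measurable φ :=
    (measurable_id.pow_const _).ennreal_ofReal.indicator measurableSet_Ioc
  have h1 : ∀ z ∈ Set.Icc (0:ℝ) 2,
      ENNReal.ofReal ((c - z) ^ (-(1/2) : ℝ)) ≤ φ (c - z) := by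
    intro z hz
    rcases le_or_gt (c - z) 0 with h | h
    · rcases eq_or_lt_of_le h with h' | h'
      · rw [h', Real.zero_rpow (by norm_num)]; simp
      · rw [Real.rpow_def_of_neg h']
        have : Real.cos (-(1/2) * Real.pi) = 0 := by
          rw [neg_mul, Real.cos_neg]
          have : (1/2 : ℝ) * Real.pi = Real.pi / 2 := by ring
          rw [this, Real.cos_pi_div_two]
        rw [this, mul_zero]; simp
    · have hmem : c - z ∈ Set.Ioc (0:ℝ) 2 := ⟨h, by linarith [hz.1]⟩
      rw [hφ, Set.indicator_of_mem hmem]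
  calc ∫⁻ z in Set.Icc (0:ℝ) 2, ENNReal.ofReal ((c - z) ^ (-(1/2) : ℝ))
      ≤ ∫⁻ z in Set.Icc (0:ℝ) 2, φ (c - z) := setLIntegral_mono (hφm.comp (measurable_const.sub measurable_id)) h1
    _ ≤ ∫⁻ z, φ (c - z) := setLIntegral_le_lintegral _ _
    _ = ∫⁻ t, φ t := (Measure.measurePreserving_sub_left volume c).lintegral_comp hφm
    _ = ∫⁻ t in Set.Ioc (0:ℝ) 2, ENNReal.ofReal (t ^ (-(1/2) : ℝ)) := by
        rw [hφ]; exact lintegral_indicator measurableSet_Ioc _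

theorem stmt_14 (α r : ℝ) (hα : 4 < α) (hr : r ∈ Set.Ioo (0 : ℝ) (1 / 2)) :
    ∫⁻ p in regionA r,
      ENNReal.ofReal (p.1 ^ (1 - α) * p.2.1 ^ (1 - α) * p.2.2 ^ (1 + α) *
        Delta p.1 p.2.1 p.2.2 ^ (-(1 / 2) : ℝ)) < ⊤ := by
  obtain ⟨hr0, hr2⟩ := hr
  set K : ℝ := r ^ (1 - α) * r ^ (1 - α) * (3 * r ^ 3) ^ (-(1/2) : ℝ) with hK
  have hKpos : 0 ≤ K := by
    apply mul_nonneg (mul_nonneg _ _) _ <;>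
      exact Real.rpow_nonneg (by positivity) _
  set G : ℝ × ℝ × ℝ → ENNReal :=
    fun p => ENNReal.ofReal ((p.1 + p.2.1 - p.2.2) ^ (-(1/2) : ℝ)) with hG
  -- pointwise bound on the region
  have hbound : ∀ p ∈ regionA r,
      ENNReal.ofReal (p.1 ^ (1 - α) * p.2.1 ^ (1 - α) * p.2.2 ^ (1 + α) *
        Delta p.1 p.2.1 p.2.2 ^ (-(1 / 2) : ℝ)) ≤ ENNReal.ofReal K * G p := by
    rintro ⟨x, y, z⟩ ⟨h1, h2, h3, h4, h5, h6⟩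
    simp only at h1 h2 h3 h4 h5 h6 ⊢
    have hx : 0 < x := lt_of_lt_of_le hr0 h1
    have hy : 0 < y := lt_trans hx h2
    have hz : 0 < z := lt_trans hy h3
    have hB : 0 ≤ x + y - z := by linarith
    rcases eq_or_lt_of_le hB with hB0 | hBpos
    · -- degenerate: Delta = 0, integrand = 0
      have : Delta x y z = 0 := by
        unfold Delta; rw [← hB0]; ring
      rw [this, Real.zero_rpow (by norm_num), mul_zero]
      simp
    · -- Delta ≥ 3 r³ (x+y-z)
      have hA : (3:ℝ) * r ≤ x + y + z := by linarith [h1.trans h2.le, h1]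
      have hC : r ≤ x - y + z := by linarith
      have hD : r ≤ -x + y + z := by linarith
      have hΔ : 3 * r ^ 3 * (x + y - z) ≤ Delta x y z := by
        unfold Delta
        have e : 3 * r ^ 3 * (x + y - z) = (3*r) * (x+y-z) * r * r := by ring
        rw [e]
        have t1 : (3*r)*(x+y-z) ≤ (x+y+z)*(x+y-z) :=
          mul_le_mul_of_nonneg_right hA hB
        have t2 : (3*r)*(x+y-z)*r ≤ (x+y+z)*(x+y-z)*(x-y+z) :=
          mul_le_mul t1 hC hr0.le (mul_nonneg (by linarith) hB)
        exact mul_le_mul t2 hD hr0.le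
          (mul_nonneg (mul_nonneg (by linarith) hB) (by linarith))
      have hΔpos : 0 < 3 * r ^ 3 * (x + y - z) := by positivity
      have hΔle : Delta x y z ^ (-(1/2) : ℝ) ≤
          (3 * r ^ 3) ^ (-(1/2) : ℝ) * (x + y - z) ^ (-(1/2) : ℝ) := by
        rw [← Real.mul_rpow (by positivity) (by positivity)]
        exact Real.rpow_le_rpow_of_nonpos hΔpos hΔ (by norm_num)
      have hx' : x ^ (1 - α) ≤ r ^ (1 - α) :=
        Real.rpow_le_rpow_of_nonpos hr0 h1 (by linarith)
      have hy' : y ^ (1 - α) ≤ r ^ (1 - α) :=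
        Real.rpow_le_rpow_of_nonpos hr0 (h1.trans h2.le) (by linarith)
      have hz' : z ^ (1 + α) ≤ 1 := Real.rpow_le_one hz.le h4 (by linarith)
      have hmain : x ^ (1 - α) * y ^ (1 - α) * z ^ (1 + α) *
          Delta x y z ^ (-(1/2) : ℝ) ≤ K * (x + y - z) ^ (-(1/2) : ℝ) := by
        have hKeq : K * (x + y - z) ^ (-(1/2) : ℝ) =
            r ^ (1-α) * r ^ (1-α) * 1 *
              ((3 * r ^ 3) ^ (-(1/2):ℝ) * (x + y - z) ^ (-(1/2) : ℝ)) := by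
          rw [hK]; ring
        rw [hKeq]
        refine mul_le_mul (mul_le_mul (mul_le_mul hx' hy'
          (Real.rpow_nonneg hy.le _) (Real.rpow_nonneg hr0.le _)) hz'
          (Real.rpow_nonneg hz.le _)
          (mul_nonneg (Real.rpow_nonneg hr0.le _) (Real.rpow_nonneg hr0.le _)))
          hΔle (Real.rpow_nonneg ?_ _)
          (by positivity)
        unfold Delta; nlinarith [mul_nonneg (mul_nonneg (by linarith : (0:ℝ) ≤ x+y+z) hB) (by linarith : (0:ℝ) ≤ x-y+z)]
      calc ENNReal.ofReal (x ^ (1 - α) * y ^ (1 - α) * z ^ (1 + α) *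
              Delta x y z ^ (-(1 / 2) : ℝ))
          ≤ ENNReal.ofReal (K * (x + y - z) ^ (-(1/2) : ℝ)) :=
            ENNReal.ofReal_le_ofReal hmain
        _ = ENNReal.ofReal K * ENNReal.ofReal ((x + y - z) ^ (-(1/2) : ℝ)) :=
            ENNReal.ofReal_mul hKpos
  -- the region is inside the box
  have hsub : regionA r ⊆ Set.Icc r 1 ×ˢ (Set.Icc r 1 ×ˢ Set.Icc (0:ℝ) 2) := by
    rintro ⟨x, y, z⟩ ⟨h1, h2, h3, h4, h5, h6⟩
    simp only at h1 h2 h3 h4 h5 h6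
    refine ⟨⟨h1, by linarith⟩, ⟨h1.trans h2.le, by linarith⟩, ⟨by linarith, by linarith⟩⟩
  set M := ∫⁻ t in Set.Ioc (0:ℝ) 2, ENNReal.ofReal (t ^ (-(1/2) : ℝ)) with hM
  -- reduce to the box integral
  have step1 : ∫⁻ p in regionA r,
      ENNReal.ofReal (p.1 ^ (1 - α) * p.2.1 ^ (1 - α) * p.2.2 ^ (1 + α) *
        Delta p.1 p.2.1 p.2.2 ^ (-(1 / 2) : ℝ))
      ≤ ∫⁻ p in Set.Icc r 1 ×ˢ (Set.Icc r 1 ×ˢ Set.Icc (0:ℝ) 2),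
          ENNReal.ofReal K * G p := by
    calc ∫⁻ p in regionA r, ENNReal.ofReal _ 
        ≤ ∫⁻ p in regionA r, ENNReal.ofReal K * G p :=
          setLIntegral_mono (aux_meas.const_mul _) hbound
      _ ≤ ∫⁻ p in Set.Icc r 1 ×ˢ (Set.Icc r 1 ×ˢ Set.Icc (0:ℝ) 2),
            ENNReal.ofReal K * G p :=
          lintegral_mono_set hsub
  -- compute the box integral via Fubini
  have step2 : ∫⁻ p in Set.Icc r 1 ×ˢ (Set.Icc r 1 ×ˢ Set.Icc (0:ℝ) 2), G p
      ≤ M * (volume (Set.Icc r (1:ℝ)) * volume (Set.Icc r (1:ℝ))) := by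
    rw [Measure.volume_eq_prod, ← Measure.prod_restrict,
      lintegral_prod _ aux_meas.aemeasurable]
    have inner2 : ∀ x ∈ Set.Icc r 1,
        ∫⁻ q in Set.Icc r 1 ×ˢ Set.Icc (0:ℝ) 2, G (x, q) ≤ M * volume (Set.Icc r (1:ℝ)) := by
      intro x hx
      rw [Measure.volume_eq_prod, ← Measure.prod_restrict,
        lintegral_prod (fun q : ℝ × ℝ => G (x, q)) (Measurable.aemeasurable (Measurable.ennreal_ofReal
          (((measurable_const.add measurable_fst).sub measurable_snd).pow_const _)))]
      have inner1 : ∀ y ∈ Set.Icc r 1,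
          ∫⁻ z in Set.Icc (0:ℝ) 2, G (x, y, z) ≤ M := by
        intro y hy
        exact aux_inner (x + y) (by linarith [hx.2, hy.2])
      calc ∫⁻ y in Set.Icc r 1, ∫⁻ z in Set.Icc (0:ℝ) 2, G (x, y, z)
          ≤ ∫⁻ _ in Set.Icc r 1, M := setLIntegral_mono' measurableSet_Icc inner1
        _ = M * volume (Set.Icc r (1:ℝ)) := by rw [setLIntegral_const]
    calc ∫⁻ x in Set.Icc r 1, ∫⁻ q in Set.Icc r 1 ×ˢ Set.Icc (0:ℝ) 2, G (x, q)
        ≤ ∫⁻ _ in Set.Icc r 1, M * volume (Set.Icc r (1:ℝ)) :=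
          setLIntegral_mono' measurableSet_Icc inner2
      _ = M * volume (Set.Icc r (1:ℝ)) * volume (Set.Icc r (1:ℝ)) := by
          rw [setLIntegral_const]
      _ = M * (volume (Set.Icc r (1:ℝ)) * volume (Set.Icc r (1:ℝ))) := by ring
  have hvol : volume (Set.Icc r (1:ℝ)) < ⊤ := by
    rw [Real.volume_Icc]; exact ENNReal.ofReal_lt_top
  have hMlt : M < ⊤ := aux_M_lt_top
  calc ∫⁻ p in regionA r, ENNReal.ofReal _
      ≤ ∫⁻ p in Set.Icc r 1 ×ˢ (Set.Icc r 1 ×ˢ Set.Icc (0:ℝ) 2),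
          ENNReal.ofReal K * G p := step1
    _ = ENNReal.ofReal K * ∫⁻ p in Set.Icc r 1 ×ˢ (Set.Icc r 1 ×ˢ Set.Icc (0:ℝ) 2), G p :=
        lintegral_const_mul _ aux_meas
    _ ≤ ENNReal.ofReal K * (M * (volume (Set.Icc r (1:ℝ)) * volume (Set.Icc r (1:ℝ)))) := by
        gcongr
    _ < ⊤ := by
        exact ENNReal.mul_lt_top ENNReal.ofReal_lt_top
          (ENNReal.mul_lt_top hMlt (ENNReal.mul_lt_top hvol hvol))
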